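/- Let v > 0, x ∈ ℝ^n, and let y ∈ P_v(x − v∇H(x)) be an exact minimizer of the proximal subproblem. Then for each index i, if y_i ≠ 0 then |y_i| ≥ (vλp(1−p))^{1/(2−p)}. -/

import Mathlib

theorem aux12 (p lam v : ℝ) (hp0 : 0 < p) (hp1 : p < 1) (hlam : 0 < lam) (hv : 0 < v)
    (t w : ℝ) (ht : 0 < t)
    (key : ∀ s : ℝ, lam * |t| ^ p + 1/(2*v) * (t - w)^2
      ≤ lam * |s| ^ p + 1/(2*v) * (s - w)^2) :
    (v * lam * p * (1 - p)) ^ ((1 : ℝ) / (2 - p)) ≤ t := by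
  have hat : |t| = t := abs_of_pos ht
  -- the 1-D objective, smooth version near t
  have h1 : HasDerivAt (fun s : ℝ => s ^ p) (p * t ^ (p-1)) t :=
    Real.hasDerivAt_rpow_const (Or.inl ht.ne')
  have h2 : HasDerivAt (fun s : ℝ => (s - w)^2) (2*(t-w)) t := by
    simpa using ((hasDerivAt_id t).sub_const w).fun_pow 2
  have hD : HasDerivAt (fun s : ℝ => lam * |s| ^ p + 1/(2*v) * (s - w)^2)
      (lam * (p * t ^ (p-1)) + 1/(2*v) * (2*(t-w))) t := by
    have hD0 : HasDerivAt (fun s : ℝ => lam * s ^ p + 1/(2*v) * (s - w)^2)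
        (lam * (p * t ^ (p-1)) + 1/(2*v) * (2*(t-w))) t :=
      (h1.const_mul lam).add (h2.const_mul (1/(2*v)))
    apply hD0.congr_of_eventuallyEq
    filter_upwards [eventually_gt_nhds ht] with s hs
    rw [abs_of_pos hs]
  have hmin : IsLocalMin (fun s : ℝ => lam * |s| ^ p + 1/(2*v) * (s - w)^2) t := by
    apply Filter.Eventually.of_forall
    intro s
    simpa [hat] using key s
  have hfoc : lam * (p * t ^ (p-1)) + 1/(2*v) * (2*(t-w)) = 0 :=
    hmin.hasDerivAt_eq_zero hD
  -- w = t + v*lam*p*t^(p-1)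
  have hw : w = t + v * lam * p * t ^ (p-1) := by
    field_simp at hfoc
    linarith
  -- comparison with 0
  have h0 := key 0
  rw [hat, abs_zero, Real.zero_rpow hp0.ne'] at h0
  -- t^(p-1) * t = t^p
  have hmul : t ^ (p-1) * t = t ^ p := by
    rw [← Real.rpow_add_one ht.ne' (p-1)]
    ring_nf
  have htp : (0:ℝ) < t ^ p := Real.rpow_pos_of_pos ht p
  -- derive 2 v lam (1-p) t^p ≤ t^2
  have hineq : 2 * v * lam * (1-p) * t ^ p ≤ t^2 := by
    have h2v : (0:ℝ) < 2*v := by linarith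
    rw [hw] at h0
    have expand : lam * t ^ p + 1/(2*v) * (t - (t + v * lam * p * t ^ (p-1)))^2
        = lam * t ^ p + (v/2) * (lam * p)^2 * (t^(p-1))^2 := by
      field_simp
      ring
    have expand2 : lam * 0 + 1/(2*v) * (0 - (t + v * lam * p * t ^ (p-1)))^2
        = 1/(2*v) * t^2 + lam * p * (t^(p-1)*t) + (v/2) * (lam*p)^2 * (t^(p-1))^2 := by
      field_simp
      ring
    rw [expand, expand2, hmul] at h0
    have : lam * t ^ p ≤ 1/(2*v) * t^2 + lam * p * t^p := by linarith
    have := mul_le_mul_of_nonneg_left this h2v.le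
    calc 2 * v * lam * (1-p) * t ^ p
        = (2*v) * (lam * t^p) - (2*v) * (lam * p * t^p) := by ring
      _ ≤ (2*v) * (1/(2*v) * t^2 + lam*p*t^p) - (2*v) * (lam*p*t^p) := by nlinarith
      _ = t^2 := by field_simp; ring
  -- t^(2-p) ≥ v lam p (1-p)
  have h2p : (0:ℝ) < 2 - p := by linarith
  have hkey : v * lam * p * (1 - p) ≤ t ^ ((2:ℝ) - p) := by
    have ht2 : t ^ ((2:ℝ) - p) = t^2 / t^p := by
      rw [Real.rpow_sub ht]
      norm_num [Real.rpow_two]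
    rw [ht2, le_div_iff₀ htp]
    nlinarith [Real.rpow_pos_of_pos ht p, mul_pos (mul_pos hv hlam) (sub_pos.mpr hp1)]
  -- conclude by taking rpow (1/(2-p))
  have hbase : (0:ℝ) < v * lam * p * (1 - p) :=
    mul_pos (mul_pos (mul_pos hv hlam) hp0) (sub_pos.mpr hp1)
  have hle : (v * lam * p * (1 - p)) ^ ((1:ℝ)/(2-p)) ≤ (t ^ ((2:ℝ)-p)) ^ ((1:ℝ)/(2-p)) :=
    Real.rpow_le_rpow hbase.le hkey (one_div_pos.mpr h2p).le
  calc (v * lam * p * (1 - p)) ^ ((1:ℝ)/(2-p)) ≤ (t ^ ((2:ℝ)-p)) ^ ((1:ℝ)/(2-p)) := hle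
    _ = t := by
        rw [← Real.rpow_mul ht.le, mul_one_div, div_self h2p.ne', Real.rpow_one]

/-- Proposition 5.1(ii), lower bound for nonzero components of the proximal
operator: for `v > 0` and `y ∈ P_v(x - v∇H(x))`, an exact minimizer of
`u ↦ λ ∑ |u_i|^p + (1/(2v)) ‖u - (x - 2v Aᵀ(Ax - b))‖²`, every nonzero component of `y`
satisfies `|y_i| ≥ (vλp(1-p))^{1/(2-p)}`. -/
theorem stmt12 (n m : ℕ) (p lam : ℝ) (hp0 : 0 < p) (hp1 : p < 1) (hlam : 0 < lam)
    (A : EuclideanSpace ℝ (Fin n) →L[ℝ] EuclideanSpace ℝ (Fin m))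
    (b : EuclideanSpace ℝ (Fin m))
    (v : ℝ) (hv : 0 < v)
    (x y : EuclideanSpace ℝ (Fin n))
    (hy : ∀ u : EuclideanSpace ℝ (Fin n),
      lam * ∑ i, |y i| ^ p +
          1 / (2 * v) * ‖y - (x - v • ((2 : ℝ) • (ContinuousLinearMap.adjoint A) (A x - b)))‖ ^ 2
        ≤ lam * ∑ i, |u i| ^ p +
          1 / (2 * v) * ‖u - (x - v • ((2 : ℝ) • (ContinuousLinearMap.adjoint A) (A x - b)))‖ ^ 2) :
    ∀ i, y i ≠ 0 → (v * lam * p * (1 - p)) ^ ((1 : ℝ) / (2 - p)) ≤ |y i| := by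
  intro i hyi
  set c : EuclideanSpace ℝ (Fin n) :=
    x - v • ((2 : ℝ) • (ContinuousLinearMap.adjoint A) (A x - b)) with hc
  have hnorm : ∀ w : EuclideanSpace ℝ (Fin n), ‖w‖ ^ 2 = ∑ j, (w j) ^ 2 := by
    intro w
    rw [EuclideanSpace.norm_eq, Real.sq_sqrt (by positivity)]
    simp [Real.norm_eq_abs, sq_abs]
  have key : ∀ s : ℝ, lam * |y i| ^ p + 1/(2*v) * (y i - c i)^2
      ≤ lam * |s| ^ p + 1/(2*v) * (s - c i)^2 := by
    intro s
    set u : EuclideanSpace ℝ (Fin n) := WithLp.toLp 2 (Function.update y i s) with hu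
    have h := hy u
    rw [hnorm, hnorm] at h
    have e1 : ∀ j, (u - c) j = u j - c j := fun j => rfl
    have e2 : ∀ j, (y - c) j = y j - c j := fun j => rfl
    simp only [e1, e2] at h
    have s1 : ∑ j, |u j| ^ p
        = |s| ^ p + ∑ j ∈ Finset.univ \ {i}, |y j| ^ p := by
      have e : ∀ j, |u j| ^ p
          = Function.update (fun j => |y j| ^ p) i (|s| ^ p) j := fun j =>
        Function.apply_update (fun _ t => |t| ^ p) y i s j
      simp only [e]
      exact Finset.sum_update_of_mem (Finset.mem_univ i) (fun j => |y j| ^ p) (|s| ^ p)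
    have s2 : ∑ j, (u j - c j) ^ 2
        = (s - c i) ^ 2 + ∑ j ∈ Finset.univ \ {i}, (y j - c j) ^ 2 := by
      have e : ∀ j, (u j - c j) ^ 2
          = Function.update (fun j => (y j - c j) ^ 2) i ((s - c i) ^ 2) j := fun j =>
        Function.apply_update (fun k t => (t - c k) ^ 2) y i s j
      simp only [e]
      exact Finset.sum_update_of_mem (Finset.mem_univ i) (fun j => (y j - c j) ^ 2)
        ((s - c i) ^ 2)
    have s3 : ∑ j, |y j| ^ p = |y i| ^ p + ∑ j ∈ Finset.univ \ {i}, |y j| ^ p := by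
      rw [Finset.sum_eq_sum_sdiff_singleton_add (Finset.mem_univ i) (fun j => |y j| ^ p)]
      ring
    have s4 : ∑ j, (y j - c j) ^ 2
        = (y i - c i) ^ 2 + ∑ j ∈ Finset.univ \ {i}, (y j - c j) ^ 2 := by
      rw [Finset.sum_eq_sum_sdiff_singleton_add (Finset.mem_univ i)
        (fun j => (y j - c j) ^ 2)]
      ring
    rw [s1, s2, s3, s4] at h
    set R := ∑ j ∈ Finset.univ \ {i}, |y j| ^ p with hR
    set T := ∑ j ∈ Finset.univ \ {i}, (y j - c j) ^ 2 with hT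
    ring_nf at h ⊢
    linarith
  rcases lt_or_gt_of_ne hyi with hneg | hpos
  · have ht : 0 < -y i := by linarith
    have habs : |y i| = -y i := abs_of_neg hneg
    rw [habs]
    apply aux12 p lam v hp0 hp1 hlam hv (-y i) (-(c i)) ht
    intro s
    have h := key (-s)
    rw [abs_neg] at h
    have q1 : (-y i - -(c i))^2 = (y i - c i)^2 := by ring
    have q2 : (s - -(c i))^2 = (-s - c i)^2 := by ring
    rw [abs_neg, q1, q2]
    exact h
  · rw [abs_of_pos hpos]
    exact aux12 p lam v hp0 hp1 hlam hv (y i) (c i) hpos key
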